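/- If X and Y are nonzero real Banach spaces, then t(X ⊕_∞ Y) = min{t(X), t(Y)}. -/

import Mathlib

/-- The thinness index `t(X)` of a normed space. -/
noncomputable def thinness (X : Type*) [NormedAddCommGroup X] : ℝ :=
  sInf {r : ℝ | 0 < r ∧ ∀ (n : ℕ) (x : Fin n → X), (∀ i, ‖x i‖ = 1) →
    ∀ ε : ℝ, 0 < ε → ∃ y : X, ‖y‖ = 1 ∧ ∀ i, ‖x i - y‖ < r + ε}

section aux

variable {X : Type*} [NormedAddCommGroup X] [NormedSpace ℝ X]

/-- The defining set of the thinness index. -/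
def thinSet (X : Type*) [NormedAddCommGroup X] : Set ℝ :=
  {r : ℝ | 0 < r ∧ ∀ (n : ℕ) (x : Fin n → X), (∀ i, ‖x i‖ = 1) →
    ∀ ε : ℝ, 0 < ε → ∃ y : X, ‖y‖ = 1 ∧ ∀ i, ‖x i - y‖ < r + ε}

lemma thinness_eq (X : Type*) [NormedAddCommGroup X] : thinness X = sInf (thinSet X) := rfl

lemma exists_unit [Nontrivial X] : ∃ u : X, ‖u‖ = 1 := by
  obtain ⟨x, hx⟩ := exists_ne (0 : X)
  refine ⟨‖x‖⁻¹ • x, ?_⟩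
  rw [norm_smul, norm_inv, norm_norm, inv_mul_cancel₀ (norm_ne_zero_iff.mpr hx)]

lemma two_mem [Nontrivial X] : (2 : ℝ) ∈ thinSet X := by
  obtain ⟨u, hu⟩ := exists_unit (X := X)
  refine ⟨two_pos, fun n x hx ε hε => ⟨u, hu, fun i => ?_⟩⟩
  calc ‖x i - u‖ ≤ ‖x i‖ + ‖u‖ := norm_sub_le _ _
    _ = 2 := by rw [hx i, hu]; norm_num
    _ < 2 + ε := by linarith

lemma one_le_of_mem [Nontrivial X] {r : ℝ} (hr : r ∈ thinSet X) : 1 ≤ r := by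
  obtain ⟨u, hu⟩ := exists_unit (X := X)
  by_contra h
  push_neg at h
  obtain ⟨y, hy, hcl⟩ := hr.2 2 ![u, -u] (by
    intro i; fin_cases i <;> simp [hu]) ((1 - r) / 2) (by linarith)
  have h1 := hcl 0
  have h2 := hcl 1
  simp only [Matrix.cons_val_zero, Matrix.cons_val_one, Matrix.head_cons] at h1 h2
  have e1 : (2 : ℝ) = ‖(u - y) - (-u - y)‖ := by
    have e : (u - y) - (-u - y) = (2 : ℝ) • u := by module
    rw [e, norm_smul, hu]; norm_num
  have e2 := norm_sub_le (u - y) (-u - y)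
  have e3 : ‖-u - y‖ = ‖-u - y‖ := rfl
  linarith [h1, h2, e2, e1.le, e1.ge]

/-- Ball version of the approximation property. -/
lemma mem_ball_version [Nontrivial X] {r : ℝ} (hr : r ∈ thinSet X)
    {n : ℕ} (x : Fin n → X) (hx : ∀ i, ‖x i‖ ≤ 1) {ε : ℝ} (hε : 0 < ε) :
    ∃ y : X, ‖y‖ = 1 ∧ ∀ i, ‖x i - y‖ < r + ε := by
  have h1r : 1 ≤ r := one_le_of_mem hr
  obtain ⟨u, hu⟩ := exists_unit (X := X)
  have hch : ∀ i, ∃ w : X, ‖w‖ = 1 ∧ x i = ‖x i‖ • w := by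
    intro i
    by_cases h : x i = 0
    · exact ⟨u, hu, by rw [h, norm_zero, zero_smul]⟩
    · refine ⟨‖x i‖⁻¹ • x i, ?_, ?_⟩
      · rw [norm_smul, norm_inv, norm_norm, inv_mul_cancel₀ (norm_ne_zero_iff.mpr h)]
      · rw [smul_smul, mul_inv_cancel₀ (norm_ne_zero_iff.mpr h), one_smul]
  choose x' hx'u hxi using hch
  obtain ⟨y, hy, hcl⟩ := hr.2 n x' hx'u ε hε
  refine ⟨y, hy, fun i => ?_⟩
  rcases eq_or_lt_of_le (norm_nonneg (x i)) with h0 | h0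
  · have hz : x i = 0 := norm_eq_zero.mp h0.symm
    rw [hz, zero_sub, norm_neg, hy]; linarith
  · set t := ‖x i‖ with ht
    have ht1 : t ≤ 1 := hx i
    have key : ‖x i - y‖ ≤ t * ‖x' i - y‖ + (1 - t) := by
      have e : x i - y = t • (x' i - y) + (t - 1) • y := by
        rw [hxi i]; module
      calc ‖x i - y‖ = ‖t • (x' i - y) + (t - 1) • y‖ := by rw [e]
        _ ≤ ‖t • (x' i - y)‖ + ‖(t - 1) • y‖ := norm_add_le _ _
        _ = t * ‖x' i - y‖ + |t - 1| * 1 := by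
            rw [norm_smul, norm_smul, Real.norm_eq_abs, Real.norm_eq_abs, hy,
              abs_of_pos h0]
        _ = t * ‖x' i - y‖ + (1 - t) := by
            rw [abs_of_nonpos (by linarith)]; ring
    have hcli := hcl i
    nlinarith [mul_lt_mul_of_pos_left hcli h0,
      mul_nonneg (sub_nonneg.mpr ht1) (by linarith : (0:ℝ) ≤ r + ε - 1)]

end aux

section prod

variable {X Y : Type*} [NormedAddCommGroup X] [NormedSpace ℝ X] [Nontrivial X]
  [NormedAddCommGroup Y] [NormedSpace ℝ Y] [Nontrivial Y]

omit [NormedSpace ℝ X] [Nontrivial X] [NormedSpace ℝ Y] [Nontrivial Y] in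
lemma norm_mk (a : X) (b : Y) : ‖(WithLp.equiv ⊤ (X × Y)).symm (a, b)‖ = max ‖a‖ ‖b‖ := by
  rw [WithLp.prod_norm_eq_sup, WithLp.equiv_symm_apply, WithLp.toLp_fst, WithLp.toLp_snd]

lemma mem_prod_left {r : ℝ} (hr : r ∈ thinSet X) : r ∈ thinSet (WithLp ⊤ (X × Y)) := by
  have h1r : 1 ≤ r := one_le_of_mem hr
  refine ⟨hr.1, fun n z hz ε hε => ?_⟩
  have hb : ∀ i, ‖(z i).fst‖ ≤ 1 := by
    intro i
    have := hz i
    rw [WithLp.prod_norm_eq_sup] at this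
    exact le_of_le_of_eq (le_max_left _ _) this
  obtain ⟨u, hu, hcl⟩ := mem_ball_version hr (fun i => (z i).fst) hb hε
  refine ⟨(WithLp.equiv ⊤ (X × Y)).symm (u, 0), by rw [norm_mk, hu]; simp, fun i => ?_⟩
  rw [WithLp.prod_norm_eq_sup, WithLp.sub_fst, WithLp.sub_snd, WithLp.equiv_symm_apply,
    WithLp.toLp_fst, WithLp.toLp_snd]
  have hsnd : ‖(z i).snd‖ ≤ 1 := by
    have := hz i
    rw [WithLp.prod_norm_eq_sup] at this
    exact le_of_le_of_eq (le_max_right _ _) this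
  refine max_lt (hcl i) ?_
  rw [WithLp.toLp_snd, show ((u, (0:Y)) : X × Y).snd = 0 from rfl, sub_zero]
  exact lt_of_le_of_lt hsnd (by linarith)

lemma mem_prod_right {r : ℝ} (hr : r ∈ thinSet Y) : r ∈ thinSet (WithLp ⊤ (X × Y)) := by
  have h1r : 1 ≤ r := one_le_of_mem hr
  refine ⟨hr.1, fun n z hz ε hε => ?_⟩
  have hb : ∀ i, ‖(z i).snd‖ ≤ 1 := by
    intro i
    have := hz i
    rw [WithLp.prod_norm_eq_sup] at this
    exact le_of_le_of_eq (le_max_right _ _) this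
  obtain ⟨v, hv, hcl⟩ := mem_ball_version hr (fun i => (z i).snd) hb hε
  refine ⟨(WithLp.equiv ⊤ (X × Y)).symm (0, v), by rw [norm_mk, hv]; simp, fun i => ?_⟩
  rw [WithLp.prod_norm_eq_sup, WithLp.sub_fst, WithLp.sub_snd, WithLp.equiv_symm_apply,
    WithLp.toLp_fst, WithLp.toLp_snd]
  have hfst : ‖(z i).fst‖ ≤ 1 := by
    have := hz i
    rw [WithLp.prod_norm_eq_sup] at this
    exact le_of_le_of_eq (le_max_left _ _) this
  refine max_lt ?_ (hcl i)
  rw [WithLp.toLp_fst, show (((0:X), v) : X × Y).fst = 0 from rfl, sub_zero]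
  exact lt_of_le_of_lt hfst (by linarith)

lemma mem_prod_elim {r : ℝ} (hr : r ∈ thinSet (WithLp ⊤ (X × Y))) :
    r ∈ thinSet X ∨ r ∈ thinSet Y := by
  by_contra hcon
  push_neg at hcon
  obtain ⟨hX, hY⟩ := hcon
  simp only [thinSet, Set.mem_setOf_eq, not_and, not_forall] at hX hY
  obtain ⟨m, x, hx, εx, hεx, hfx⟩ := hX hr.1
  obtain ⟨k, y, hy, εy, hεy, hfy⟩ := hY hr.1
  push_neg at hfx hfy
  obtain ⟨a, ha⟩ := exists_unit (X := X)
  obtain ⟨b, hb⟩ := exists_unit (X := Y)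
  set ε := min εx εy with hεdef
  have hε : 0 < ε := lt_min hεx hεy
  set z : Fin (m + k) → WithLp ⊤ (X × Y) :=
    fun i => Fin.addCases (fun i => (WithLp.equiv ⊤ (X × Y)).symm (x i, b))
      (fun j => (WithLp.equiv ⊤ (X × Y)).symm (a, y j)) i with hzdef
  have hzl : ∀ i : Fin m, z (Fin.castAdd k i) = (WithLp.equiv ⊤ (X × Y)).symm (x i, b) := by
    intro i; rw [hzdef]; exact Fin.addCases_left i
  have hzr : ∀ j : Fin k, z (Fin.natAdd m j) = (WithLp.equiv ⊤ (X × Y)).symm (a, y j) := by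
    intro j; rw [hzdef]; exact Fin.addCases_right j
  have hzu : ∀ i, ‖z i‖ = 1 := by
    intro i
    induction i using Fin.addCases with
    | left i => rw [hzl i, norm_mk, hx i, hb]; simp
    | right j => rw [hzr j, norm_mk, hy j, ha]; simp
  obtain ⟨w, hw, hcl⟩ := hr.2 (m + k) z hzu ε hε
  rw [WithLp.prod_norm_eq_sup] at hw
  rcases max_choice ‖w.fst‖ ‖w.snd‖ with hc | hc
  · obtain ⟨i, hi⟩ := hfx w.fst (hc ▸ hw)
    have hci := hcl (Fin.castAdd k i)
    rw [hzl i, WithLp.prod_norm_eq_sup, WithLp.sub_fst, WithLp.equiv_symm_apply, WithLp.toLp_fst] at hci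
    have : ‖x i - w.fst‖ < r + ε := lt_of_le_of_lt (le_max_left _ _) hci
    have hle : ε ≤ εx := min_le_left _ _
    linarith
  · obtain ⟨j, hj⟩ := hfy w.snd (hc ▸ hw)
    have hcj := hcl (Fin.natAdd m j)
    rw [hzr j, WithLp.prod_norm_eq_sup, WithLp.sub_snd, WithLp.equiv_symm_apply, WithLp.toLp_snd] at hcj
    have : ‖y j - w.snd‖ < r + ε := lt_of_le_of_lt (le_max_right _ _) hcj
    have hle : ε ≤ εy := min_le_right _ _
    linarith

end prod

/-- For nonzero Banach spaces `X`, `Y` one has `t(X ⊕_∞ Y) = min {t(X), t(Y)}`. -/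
theorem thinness_prodLinfty
    (X Y : Type*) [NormedAddCommGroup X] [NormedSpace ℝ X] [CompleteSpace X] [Nontrivial X]
    [NormedAddCommGroup Y] [NormedSpace ℝ Y] [CompleteSpace Y] [Nontrivial Y] :
    thinness (WithLp ⊤ (X × Y)) = min (thinness X) (thinness Y) := by
  rw [thinness_eq, thinness_eq, thinness_eq]
  have hbdd : BddBelow (thinSet (WithLp ⊤ (X × Y))) :=
    ⟨0, fun r hr => le_of_lt hr.1⟩
  have hne : (thinSet (WithLp ⊤ (X × Y))).Nonempty := ⟨2, mem_prod_left two_mem⟩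
  refine le_antisymm (le_min ?_ ?_) ?_
  · exact csInf_le_csInf hbdd ⟨2, two_mem⟩ (fun r hr => mem_prod_left hr)
  · exact csInf_le_csInf hbdd ⟨2, two_mem⟩ (fun r hr => mem_prod_right hr)
  · refine le_csInf hne (fun r hr => ?_)
    rcases mem_prod_elim hr with h | h
    · exact le_trans (min_le_left _ _) (csInf_le ⟨0, fun s hs => le_of_lt hs.1⟩ h)
    · exact le_trans (min_le_right _ _) (csInf_le ⟨0, fun s hs => le_of_lt hs.1⟩ h)
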